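/- In RST, if ∀y₁…∀yₙ ∃!x φ is provable and φ ≻_RST {x}, then the term ιxφ := ⋂{x | φ} provably denotes that unique set: RST proves φ[x ↦ ιxφ]. -/
import Mathlib


/-- In RST, if `∃!x φ` is provable (for all parameter values) and `φ ≻_RST {x}`, then the
term `ιxφ := ⋂{x ∣ φ}` denotes that unique set: RST proves `φ[x ↦ ιxφ]`.
(Stated semantically: `P` interprets `φ`, `CP` interprets the legal term `{x ∣ φ}`, and
`inter` interprets `⋂`; under the comprehension instances and extensionality, if there
is a unique `x` with `P x`, then `P (inter CP)`.) -/
theorem iota_denotes_unique (M : Type*) (mem : M → M → Prop)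
    (P : M → Prop) (CP : M) (inter : M → M)
    (hCP : ∀ x : M, mem x CP ↔ P x)
    (hinter : ∀ t x : M,
      mem x (inter t) ↔ (∃ y, mem y t ∧ mem x y) ∧ ∀ y, mem y t → mem x y)
    (hext : ∀ x y : M, (∀ z, mem z x ↔ mem z y) → x = y)
    (huniq : ∃! x : M, P x) :
    P (inter CP) := by
  obtain ⟨a, ha, hu⟩ := huniq
  have haCP : mem a CP := (hCP a).mpr ha
  have : inter CP = a := by
    apply hext
    intro z
    rw [hinter]
    constructor
    · rintro ⟨⟨y, hy, hzy⟩, -⟩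
      have : y = a := hu y ((hCP y).mp hy)
      exact this ▸ hzy
    · intro hz
      refine ⟨⟨a, haCP, hz⟩, fun y hy => ?_⟩
      have : y = a := hu y ((hCP y).mp hy)
      exact this ▸ hz
  rw [this]; exact ha
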